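/- Fix real p > 1 and b > 0, and set q̃_b := (p−1)/(b^{p−1}+1) + b/(b+1). Then for every q̄ with 0 < q̄ < q̃_b there exists an integer k₀ ≥ 1 such that γ_{k+1} ≤ exp(−q̄/k) for all integers k ≥ k₀. -/

import Mathlib

open Real Filter Topology

/-- `α_{i+1} = ((i+1)^{p−1} − i^{p−1})/((i+1)^{p−1} + b^{p−1} i^{p−1})`. -/
noncomputable def alphaCoef (p b : ℝ) (i : ℕ) : ℝ :=
  (((i : ℝ) + 1) ^ (p - 1) - (i : ℝ) ^ (p - 1)) /
    (((i : ℝ) + 1) ^ (p - 1) + b ^ (p - 1) * (i : ℝ) ^ (p - 1))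

/-- `β_{i+1} = (1 − α_{i+1}) · b/((b+1)(i+1))`. -/
noncomputable def betaCoef (p b : ℝ) (i : ℕ) : ℝ :=
  (1 - alphaCoef p b i) * (b / ((b + 1) * ((i : ℝ) + 1)))

/-- `γ_{i+1} = 1 − α_{i+1} − β_{i+1}`. -/
noncomputable def gammaCoef (p b : ℝ) (i : ℕ) : ℝ :=
  1 - alphaCoef p b i - betaCoef p b i

lemma slope_tendsto (p : ℝ) :
    Tendsto (fun k : ℕ => ((1 + 1/(k:ℝ)) ^ (p-1) - 1) / (1/(k:ℝ))) atTop (𝓝 (p-1)) := by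
  have hd : HasDerivAt (fun t : ℝ => (1 + t) ^ (p-1)) (p-1) 0 := by
    have h1 : HasDerivAt (fun x : ℝ => x ^ (p-1)) ((p-1) * ((1:ℝ)+0) ^ (p-1-1)) ((1:ℝ)+0) :=
      Real.hasDerivAt_rpow_const (by norm_num)
    have h2 : HasDerivAt (fun t : ℝ => 1 + t) 1 0 := by
      simpa using (hasDerivAt_id (0:ℝ)).const_add 1
    have := h1.comp (0:ℝ) h2
    simp only [add_zero, Real.one_rpow, mul_one] at this
    exact this
  have hslope := hasDerivAt_iff_tendsto_slope.mp hd
  have hto : Tendsto (fun k : ℕ => 1/(k:ℝ)) atTop (𝓝[≠] 0) := by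
    apply tendsto_nhdsWithin_of_tendsto_nhds_of_eventually_within
    · exact tendsto_one_div_atTop_nhds_zero_nat
    · filter_upwards [eventually_ge_atTop 1] with k hk
      simp only [Set.mem_compl_iff, Set.mem_singleton_iff]
      positivity
  have := hslope.comp hto
  apply this.congr
  intro k
  simp [slope_def_field, div_eq_mul_inv, mul_comm]

lemma alpha_rw (p b : ℝ) {k : ℕ} (hk : 1 ≤ k) :
    alphaCoef p b k =
      ((1 + 1/(k:ℝ)) ^ (p-1) - 1) / ((1 + 1/(k:ℝ)) ^ (p-1) + b ^ (p-1)) := by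
  have hx : (0:ℝ) < (k:ℝ) := by exact_mod_cast hk
  have hx1 : ((k:ℝ) + 1) = (k:ℝ) * (1 + 1/(k:ℝ)) := by field_simp
  rw [alphaCoef, hx1, Real.mul_rpow hx.le (by positivity),
    show (k:ℝ)^(p-1) * (1 + 1/(k:ℝ))^(p-1) - (k:ℝ)^(p-1)
      = (k:ℝ)^(p-1) * ((1 + 1/(k:ℝ))^(p-1) - 1) by ring,
    show (k:ℝ)^(p-1) * (1 + 1/(k:ℝ))^(p-1) + b^(p-1) * (k:ℝ)^(p-1)
      = (k:ℝ)^(p-1) * ((1 + 1/(k:ℝ))^(p-1) + b^(p-1)) by ring,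
    mul_div_mul_left _ _ (by positivity : ((k:ℝ))^(p-1) ≠ 0)]

/-- **Lemma.** With `q̃_b = (p−1)/(b^{p−1}+1) + b/(b+1)`, for every `0 < q̄ < q̃_b`
there is an integer `k₀ ≥ 1` with `γ_{k+1} ≤ exp(−q̄/k)` for all `k ≥ k₀`. -/
theorem gamma_exponential_bound (p b : ℝ) (hp : 1 < p) (hb : 0 < b)
    (qt : ℝ) (hqt : qt = (p - 1) / (b ^ (p - 1) + 1) + b / (b + 1))
    (qbar : ℝ) (hq : 0 < qbar) (hq' : qbar < qt) :
    ∃ k₀ : ℕ, 1 ≤ k₀ ∧ ∀ k : ℕ, k₀ ≤ k →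
      gammaCoef p b k ≤ Real.exp (-qbar / (k : ℝ)) := by
  have hbm : (0:ℝ) < b ^ (p-1) + 1 := by positivity
  -- limit of the base term
  have hbase : Tendsto (fun k : ℕ => (1 + 1/(k:ℝ)) ^ (p-1)) atTop (𝓝 1) := by
    have h1 : Tendsto (fun k : ℕ => 1 + 1/(k:ℝ)) atTop (𝓝 1) := by
      simpa using (tendsto_one_div_atTop_nhds_zero_nat :
        Tendsto (fun k : ℕ => 1/(k:ℝ)) atTop (𝓝 0)).const_add (1:ℝ)
    have := h1.rpow_const (p := p - 1) (Or.inl one_ne_zero)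
    simpa using this
  -- k * alpha tends to (p-1)/(b^(p-1)+1)
  have hA : Tendsto (fun k : ℕ => (k:ℝ) * alphaCoef p b k) atTop
      (𝓝 ((p-1) / (b ^ (p-1) + 1))) := by
    have hden : Tendsto (fun k : ℕ => (1 + 1/(k:ℝ)) ^ (p-1) + b ^ (p-1)) atTop
        (𝓝 (1 + b ^ (p-1))) := hbase.add tendsto_const_nhds
    have := (slope_tendsto p).div hden (by positivity)
    rw [show (1:ℝ) + b ^ (p-1) = b ^ (p-1) + 1 by ring] at this
    apply this.congr'
    filter_upwards [eventually_ge_atTop 1] with k hk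
    have hx : (0:ℝ) < (k:ℝ) := by exact_mod_cast hk
    show ((1 + 1/(k:ℝ)) ^ (p-1) - 1) / (1/(k:ℝ)) / ((1 + 1/(k:ℝ)) ^ (p-1) + b ^ (p-1))
      = (k:ℝ) * alphaCoef p b k
    rw [alpha_rw p b hk]
    field_simp
  -- alpha tends to 0
  have hα0 : Tendsto (fun k : ℕ => alphaCoef p b k) atTop (𝓝 0) := by
    have := hA.mul tendsto_one_div_atTop_nhds_zero_nat
    rw [mul_zero] at this
    apply this.congr'
    filter_upwards [eventually_ge_atTop 1] with k hk
    have hx : ((k:ℝ)) ≠ 0 := by positivity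
    field_simp [mul_comm]
  -- k * beta tends to b/(b+1)
  have hB : Tendsto (fun k : ℕ => (k:ℝ) * betaCoef p b k) atTop (𝓝 (b / (b+1))) := by
    have hr : Tendsto (fun k : ℕ => (k:ℝ) / ((k:ℝ)+1)) atTop (𝓝 1) := by
      have h0 : Tendsto (fun k : ℕ => 1 - 1/((k:ℝ)+1)) atTop (𝓝 (1 - 0)) :=
        tendsto_const_nhds.sub tendsto_one_div_add_atTop_nhds_zero_nat
      rw [sub_zero] at h0
      apply h0.congr
      intro k
      have : ((k:ℝ)+1) ≠ 0 := by positivity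
      field_simp
      ring
    have h1 : Tendsto (fun k : ℕ => (1 - alphaCoef p b k) * (b/(b+1)) * ((k:ℝ)/((k:ℝ)+1)))
        atTop (𝓝 ((1 - 0) * (b/(b+1)) * 1)) :=
      ((tendsto_const_nhds.sub hα0).mul tendsto_const_nhds).mul hr
    rw [show (1 - (0:ℝ)) * (b/(b+1)) * 1 = b/(b+1) by ring] at h1
    apply h1.congr
    intro k
    rw [betaCoef]
    have : ((k:ℝ)+1) ≠ 0 := by positivity
    have : (b+1) ≠ 0 := by positivity
    field_simp
  -- combined limit
  have hf : Tendsto (fun k : ℕ => (k:ℝ) * (alphaCoef p b k + betaCoef p b k)) atTop (𝓝 qt) := by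
    have := hA.add hB
    rw [← hqt] at this
    apply this.congr
    intro k; ring
  have hev : ∀ᶠ k : ℕ in atTop, qbar ≤ (k:ℝ) * (alphaCoef p b k + betaCoef p b k) :=
    hf.eventually (eventually_ge_nhds hq')
  obtain ⟨k₀, hk₀⟩ := (hev.and (eventually_ge_atTop 1)).exists_forall_of_atTop
  refine ⟨max k₀ 1, le_max_right _ _, fun k hk => ?_⟩
  obtain ⟨hkq, hk1⟩ := hk₀ k (le_trans (le_max_left _ _) hk)
  have hx : (0:ℝ) < (k:ℝ) := by exact_mod_cast hk1
  have hdiv : qbar / (k:ℝ) ≤ alphaCoef p b k + betaCoef p b k := by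
    rw [div_le_iff₀ hx]; linarith [hkq]
  calc gammaCoef p b k = 1 - (alphaCoef p b k + betaCoef p b k) := by
        rw [gammaCoef]; ring
    _ ≤ 1 - qbar / (k:ℝ) := by linarith
    _ = -qbar / (k:ℝ) + 1 := by ring
    _ ≤ Real.exp (-qbar / (k:ℝ)) := Real.add_one_le_exp _
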